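/- Let n ≥ 1, let Ω ⊆ ℝ^n be open, let k_{ij} : ℝ^n → ℝ be C¹, let h : Ω → ℝ, and let ε > 0. Suppose: (a) T^ε : Ω → ℝ is C² and satisfies −∂_i( k_{ij}(x/ε) ∂_j T^ε )(x) = h(x) on Ω; (b) T⁽⁰⁾ : Ω → ℝ is C³ and satisfies the homogenized equation −k̂_{ij} ∂_i∂_j T⁽⁰⁾(x) = h(x) on Ω for constants k̂_{ij}; (c) for each α, M_α : ℝ^n → ℝ is C² and satisfies ∂_{y_i}( k_{ij}(y) ∂_{y_j}M_α(y) ) = −∂_{y_i}k_{iα}(y) for all y. Define the first-order two-scale approximation T^{(1ε)}(x) = T⁽⁰⁾(x) + ε M_α(x/ε) ∂_α T⁽⁰⁾(x) and the residual T_Δ^{(1ε)} = T^ε − T^{(1ε)}. Then for every x ∈ Ω, −∂_i( k_{ij}(x/ε) ∂_j T_Δ^{(1ε)} )(x) = F₀(x, x/ε) + ε F₁(x, x/ε), where (with Einstein summation, ∂_{x_i} acting on x-arguments and ∂_{y_i} on y-arguments) F₀(x,y) = −k̂_{ij} ∂_{x_i}∂_{x_j}T⁽⁰⁾(x) + ∂_{x_i}(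 k_{ij}(y) ∂_{x_j}T⁽⁰⁾(x) ) + ∂_{x_i}( k_{ij}(y) ∂_{y_j}( M_α(y) ∂_{x_α}T⁽⁰⁾(x) ) ) + ∂_{y_i}( k_{ij}(y) ∂_{x_j}( M_α(y) ∂_{x_α}T⁽⁰⁾(x) ) ) and F₁(x,y) = ∂_{x_i}( k_{ij}(y) ∂_{x_j}( M_α(y) ∂_{x_α}T⁽⁰⁾(x) ) ). -/

import Mathlib

open scoped BigOperators

/-- Partial derivative of `f : ℝ^n → ℝ` in the `i`-th coordinate direction. -/
noncomputable def pd {n : ℕ} (i : Fin n) (f : (Fin n → ℝ) → ℝ) (y : Fin n → ℝ) : ℝ :=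
  fderiv ℝ f y (Pi.single i 1)

section helpers

variable {n : ℕ} {i j : Fin n} {f g : (Fin n → ℝ) → ℝ} {x : Fin n → ℝ}

lemma pd_congr (h : f =ᶠ[nhds x] g) : pd i f x = pd i g x := by
  unfold pd; rw [Filter.EventuallyEq.fderiv_eq h]

lemma pd_add (hf : DifferentiableAt ℝ f x) (hg : DifferentiableAt ℝ g x) :
    pd i (fun x => f x + g x) x = pd i f x + pd i g x := by
  unfold pd; rw [fderiv_fun_add hf hg]; rfl

lemma pd_sub (hf : DifferentiableAt ℝ f x) (hg : DifferentiableAt ℝ g x) :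
    pd i (fun x => f x - g x) x = pd i f x - pd i g x := by
  unfold pd; rw [fderiv_fun_sub hf hg]; rfl

lemma pd_mul (hf : DifferentiableAt ℝ f x) (hg : DifferentiableAt ℝ g x) :
    pd i (fun x => f x * g x) x = pd i f x * g x + f x * pd i g x := by
  unfold pd; rw [fderiv_fun_mul hf hg]
  simp only [ContinuousLinearMap.add_apply, ContinuousLinearMap.smul_apply, smul_eq_mul]
  ring

lemma pd_const_mul (c : ℝ) (hf : DifferentiableAt ℝ f x) :
    pd i (fun x => c * f x) x = c * pd i f x := by
  unfold pd; rw [fderiv_const_mul hf]; rfl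

lemma pd_mul_const (c : ℝ) (hf : DifferentiableAt ℝ f x) :
    pd i (fun x => f x * c) x = pd i f x * c := by
  unfold pd; rw [fderiv_mul_const hf]; simp [mul_comm]

lemma pd_sum {s : Finset (Fin n)} {F : Fin n → (Fin n → ℝ) → ℝ}
    (hF : ∀ j ∈ s, DifferentiableAt ℝ (F j) x) :
    pd i (fun x => ∑ j ∈ s, F j x) x = ∑ j ∈ s, pd i (F j) x := by
  unfold pd; rw [fderiv_fun_sum hF]; simp

lemma pd_comp_smul (c : ℝ) (hf : DifferentiableAt ℝ f (c • x)) :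
    pd i (fun x => f (c • x)) x = c * pd i f (c • x) := by
  have hL : (fun x : Fin n → ℝ => f (c • x)) = f ∘ (c • ContinuousLinearMap.id ℝ (Fin n → ℝ)) := rfl
  unfold pd
  rw [hL, fderiv_comp x (by simpa using hf) (ContinuousLinearMap.differentiableAt _)]
  rw [ContinuousLinearMap.fderiv]
  simp [mul_comm]

lemma pd_comp_mul (c : ℝ) (g f : (Fin n → ℝ) → ℝ)
    (hg : DifferentiableAt ℝ g (c • x)) (hf : DifferentiableAt ℝ f x) :
    pd i (fun x' => g (c • x') * f x') x
      = c * pd i g (c • x) * f x + g (c • x) * pd i f x := by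
  have h1 : DifferentiableAt ℝ (fun x' => g (c • x')) x :=
    hg.comp x ((differentiable_id.const_smul c) x)
  have h2 : pd i (fun x' => g (c • x') * f x') x
      = pd i (fun x' => g (c • x')) x * f x + g (c • x) * pd i f x := pd_mul h1 hf
  rw [h2, pd_comp_smul c hg]

lemma contDiffOn_pd {Ω : Set (Fin n → ℝ)} (hΩ : IsOpen Ω) {m : ℕ∞}
    (hf : ContDiffOn ℝ (m + 1) f Ω) (i : Fin n) : ContDiffOn ℝ m (pd i f) Ω := by
  have h1 : ContDiffOn ℝ m (fun y => fderiv ℝ f y) Ω :=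
    hf.fderiv_of_isOpen hΩ le_rfl
  exact (ContinuousLinearMap.apply ℝ ℝ (Pi.single i 1 : Fin n → ℝ)).contDiff.comp_contDiffOn h1

lemma contDiff_pd {m : ℕ∞} (hf : ContDiff ℝ (m + 1) f) (i : Fin n) : ContDiff ℝ m (pd i f) := by
  have h1 : ContDiff ℝ m (fun y => fderiv ℝ f y) := hf.fderiv_right le_rfl
  exact (ContinuousLinearMap.apply ℝ ℝ (Pi.single i 1 : Fin n → ℝ)).contDiff.comp h1

lemma final_algebra (c ε : ℝ) (hεc : ε * c = 1)
    (K dk dM d2T : Fin n → Fin n → ℝ) (Mv dT : Fin n → ℝ)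
    (d2M d3T : Fin n → Fin n → Fin n → ℝ)
    (key : ∀ α, ∑ i, ∑ j, (dk i j * dM j α + K i j * d2M i j α) = -∑ i, dk i α) :
    ∑ i, ∑ j, (c * dk i j * (dT j + ∑ α, (dM j α * dT α + ε * (Mv α * d2T j α)))
      + K i j * (d2T i j + ∑ α, (c * d2M i j α * dT α + dM j α * d2T i α
          + ε * (c * dM i α * d2T j α + Mv α * d3T i j α))))
    = (∑ i, ∑ j, K i j * d2T i j)
    + (∑ i, ∑ j, K i j * ∑ α, dM j α * d2T i α)
    + (∑ i, ∑ j, (dk i j * ∑ α, Mv α * d2T j α + K i j * ∑ α, dM i α * d2T j α))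
    + ε * (∑ i, ∑ j, K i j * ∑ α, Mv α * d3T i j α) := by
  have per : ∀ i j,
      c * dk i j * (dT j + ∑ α, (dM j α * dT α + ε * (Mv α * d2T j α)))
      + K i j * (d2T i j + ∑ α, (c * d2M i j α * dT α + dM j α * d2T i α
          + ε * (c * dM i α * d2T j α + Mv α * d3T i j α)))
      = (K i j * d2T i j + K i j * ∑ α, dM j α * d2T i α
          + (dk i j * ∑ α, Mv α * d2T j α + K i j * ∑ α, dM i α * d2T j α)
          + ε * (K i j * ∑ α, Mv α * d3T i j α))
        + c * (dk i j * dT j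
          + ∑ α, (dk i j * dM j α + K i j * d2M i j α) * dT α) := by
    intro i j
    have h1 : ∑ α, (dM j α * dT α + ε * (Mv α * d2T j α))
        = (∑ α, dM j α * dT α) + ε * ∑ α, Mv α * d2T j α := by
      rw [Finset.sum_add_distrib, ← Finset.mul_sum]
    have h2 : ∑ α, (c * d2M i j α * dT α + dM j α * d2T i α
          + ε * (c * dM i α * d2T j α + Mv α * d3T i j α))
        = c * (∑ α, d2M i j α * dT α) + (∑ α, dM j α * d2T i α)
          + ε * c * (∑ α, dM i α * d2T j α) + ε * ∑ α, Mv α * d3T i j α := by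
      simp only [Finset.sum_add_distrib, ← Finset.mul_sum, mul_assoc, mul_add]
      ring
    have h3 : ∑ α, (dk i j * dM j α + K i j * d2M i j α) * dT α
        = dk i j * (∑ α, dM j α * dT α) + K i j * ∑ α, d2M i j α * dT α := by
      simp only [add_mul, Finset.sum_add_distrib, ← Finset.mul_sum, mul_assoc]
    rw [h1, h2, h3]
    linear_combination (dk i j * (∑ α, Mv α * d2T j α)
      + K i j * ∑ α, dM i α * d2T j α) * hεc
  calc ∑ i, ∑ j, _ = ∑ i, ∑ j, ((K i j * d2T i j + K i j * ∑ α, dM j α * d2T i α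
          + (dk i j * ∑ α, Mv α * d2T j α + K i j * ∑ α, dM i α * d2T j α)
          + ε * (K i j * ∑ α, Mv α * d3T i j α))
        + c * (dk i j * dT j
          + ∑ α, (dk i j * dM j α + K i j * d2M i j α) * dT α)) := by
        exact Finset.sum_congr rfl fun i _ => Finset.sum_congr rfl fun j _ => per i j
    _ = _ := by
        simp only [Finset.sum_add_distrib, ← Finset.mul_sum]
        have e1 : ∑ i, ∑ j, ∑ α, (dk i j * dM j α + K i j * d2M i j α) * dT α
            = ∑ α, (∑ i, ∑ j, (dk i j * dM j α + K i j * d2M i j α)) * dT α := by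
          calc ∑ i, ∑ j, ∑ α, (dk i j * dM j α + K i j * d2M i j α) * dT α
              = ∑ i, ∑ α, ∑ j, (dk i j * dM j α + K i j * d2M i j α) * dT α :=
                Finset.sum_congr rfl fun i _ => Finset.sum_comm
            _ = ∑ α, ∑ i, ∑ j, (dk i j * dM j α + K i j * d2M i j α) * dT α :=
                Finset.sum_comm
            _ = _ := by
                refine Finset.sum_congr rfl fun α _ => ?_
                rw [Finset.sum_mul]
                exact Finset.sum_congr rfl fun i _ => (Finset.sum_mul _ _ _).symm
        have e2 : ∑ α, (∑ i, dk i α) * dT α = ∑ i, ∑ j, dk i j * dT j := by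
          calc ∑ α, (∑ i, dk i α) * dT α = ∑ α, ∑ i, dk i α * dT α :=
                Finset.sum_congr rfl fun α _ => Finset.sum_mul _ _ _
            _ = ∑ i, ∑ α, dk i α * dT α := Finset.sum_comm
        rw [e1]
        simp only [key, neg_mul]
        rw [Finset.sum_neg_distrib, e2]
        ring

end helpers

/-- **FOTS residual equation.**  With `T^{(1ε)}(x) = T⁰(x) + ε M_α(x/ε)∂_α T⁰(x)` and
residual `T_Δ^{(1ε)} = T^ε − T^{(1ε)}`, one has, pointwise on `Ω`,
`−∂_i(k_{ij}(x/ε)∂_j T_Δ^{(1ε)}) = F₀(x,x/ε) + ε F₁(x,x/ε)`; in particular the FOTS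
residual is of order `O(1)` in the pointwise sense. -/
theorem fots_residual_equation (n : ℕ) (hn : 1 ≤ n)
    (Ω : Set (Fin n → ℝ)) (hΩ : IsOpen Ω)
    (k : Fin n → Fin n → (Fin n → ℝ) → ℝ)
    (hk : ∀ i j, ContDiff ℝ 1 (k i j))
    (h : (Fin n → ℝ) → ℝ)
    (khat : Fin n → Fin n → ℝ)
    (ε : ℝ) (hε : 0 < ε)
    (Te : (Fin n → ℝ) → ℝ) (hTe : ContDiffOn ℝ 2 Te Ω)
    -- (a) the heterogeneous equation on Ω:
    (hTeeq : ∀ x ∈ Ω,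
      -∑ i, pd i (fun x' => ∑ j, k i j (ε⁻¹ • x') * pd j Te x') x = h x)
    (T0 : (Fin n → ℝ) → ℝ) (hT0 : ContDiffOn ℝ 3 T0 Ω)
    -- (b) the homogenized equation with constant coefficients k̂ on Ω:
    (hT0eq : ∀ x ∈ Ω, -∑ i, ∑ j, khat i j * pd i (pd j T0) x = h x)
    (M : Fin n → (Fin n → ℝ) → ℝ)
    (hM : ∀ α, ContDiff ℝ 2 (M α))
    -- (c) the first-order cell equations:
    (hcell : ∀ (α : Fin n) (y : Fin n → ℝ),
      ∑ i, pd i (fun y' => ∑ j, k i j y' * pd j (M α) y') y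
        = -∑ i, pd i (k i α) y) :
    ∀ x ∈ Ω,
      -∑ i, pd i (fun x' => ∑ j, k i j (ε⁻¹ • x') *
          pd j (fun x'' => Te x''
            - (T0 x'' + ε * ∑ α, M α (ε⁻¹ • x'') * pd α T0 x'')) x') x
      =
      -- F₀(x, x/ε)
      ((-∑ i, ∑ j, khat i j * pd i (pd j T0) x)
        + (∑ i, pd i (fun x' => ∑ j, k i j (ε⁻¹ • x) * pd j T0 x') x)
        + (∑ i, pd i (fun x' => ∑ j, k i j (ε⁻¹ • x) *
            pd j (fun y' => ∑ α, M α y' * pd α T0 x') (ε⁻¹ • x)) x)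
        + (∑ i, pd i (fun y' => ∑ j, k i j y' *
            pd j (fun x' => ∑ α, M α y' * pd α T0 x') x) (ε⁻¹ • x)))
      +
      -- ε F₁(x, x/ε)
      ε * (∑ i, pd i (fun x' => ∑ j, k i j (ε⁻¹ • x) *
            pd j (fun x'' => ∑ α, M α (ε⁻¹ • x) * pd α T0 x'') x') x) := by
  intro x hx
  have hTeeq' := hTeeq x hx
  have hT0eq' := hT0eq x hx
  clear hTeeq hT0eq
  set c := ε⁻¹ with hc
  have hεc : ε * c = 1 := mul_inv_cancel₀ hε.ne'
  -- differentiability library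
  have hkD : ∀ i j (z : Fin n → ℝ), DifferentiableAt ℝ (k i j) z := fun i j z =>
    ((hk i j).differentiable one_ne_zero).differentiableAt
  have hMD : ∀ α (z : Fin n → ℝ), DifferentiableAt ℝ (M α) z := fun α z =>
    ((hM α).differentiable two_ne_zero).differentiableAt
  have hM2 : ∀ α, ContDiff ℝ ((1 : ℕ∞) + 1) (M α) := fun α => by
    exact_mod_cast hM α
  have hdMD : ∀ α j (z : Fin n → ℝ), DifferentiableAt ℝ (pd j (M α)) z := fun α j z =>
    ((contDiff_pd (hM2 α) j).differentiable (by simp)).differentiableAt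
  have hTe' : ContDiffOn ℝ ((1:ℕ∞) + 1) Te Ω := by exact_mod_cast hTe
  have hT0' : ContDiffOn ℝ (((1:ℕ∞) + 1) + 1) T0 Ω := by exact_mod_cast hT0
  have hTeD : ∀ z ∈ Ω, DifferentiableAt ℝ Te z := fun z hz =>
    (hTe.differentiableOn two_ne_zero).differentiableAt (hΩ.mem_nhds hz)
  have hdTeD : ∀ (j : Fin n), ∀ z ∈ Ω, DifferentiableAt ℝ (pd j Te) z := fun j z hz =>
    ((contDiffOn_pd hΩ hTe' j).differentiableOn (by simp)).differentiableAt (hΩ.mem_nhds hz)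
  have hT0D : ∀ z ∈ Ω, DifferentiableAt ℝ T0 z := fun z hz =>
    (hT0.differentiableOn (by norm_num)).differentiableAt (hΩ.mem_nhds hz)
  have hdT0 : ∀ α, ContDiffOn ℝ ((1:ℕ∞)+1) (pd α T0) Ω := fun α => contDiffOn_pd hΩ hT0' α
  have hdT0D : ∀ (α : Fin n), ∀ z ∈ Ω, DifferentiableAt ℝ (pd α T0) z := fun α z hz =>
    ((hdT0 α).differentiableOn (by norm_num)).differentiableAt (hΩ.mem_nhds hz)
  have hd2T0D : ∀ (j α : Fin n), ∀ z ∈ Ω, DifferentiableAt ℝ (pd j (pd α T0)) z :=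
    fun j α z hz =>
    ((contDiffOn_pd hΩ (hdT0 α) j).differentiableOn (by simp)).differentiableAt (hΩ.mem_nhds hz)
  have hcomp : ∀ (g : (Fin n → ℝ) → ℝ) (z : Fin n → ℝ), DifferentiableAt ℝ g (c • z) →
      DifferentiableAt ℝ (fun x' => g (c • x')) z := fun g z hg =>
    hg.comp z ((differentiable_id.const_smul c) z)
  -- the inner first-derivative identity, valid on Ω
  have hinner : ∀ (j : Fin n), ∀ z ∈ Ω,
      pd j (fun x'' => Te x'' - (T0 x'' + ε * ∑ α, M α (c • x'') * pd α T0 x'')) z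
      = pd j Te z - (pd j T0 z + ∑ α, (pd j (M α) (c • z) * pd α T0 z
          + ε * (M α (c • z) * pd j (pd α T0) z))) := by
    intro j z hz
    have hd1 : DifferentiableAt ℝ (fun x'' => ∑ α, M α (c • x'') * pd α T0 x'') z :=
      DifferentiableAt.fun_sum fun α _ => (hcomp (M α) z (hMD α _)).mul (hdT0D α z hz)
    have e1 : pd j (fun x'' => Te x'' - (T0 x'' + ε * ∑ α, M α (c • x'') * pd α T0 x'')) z
        = pd j Te z - pd j (fun x'' => T0 x'' + ε * ∑ α, M α (c • x'') * pd α T0 x'') z :=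
      pd_sub (hTeD z hz) ((hT0D z hz).add (hd1.const_mul ε))
    have e2 : pd j (fun x'' => T0 x'' + ε * ∑ α, M α (c • x'') * pd α T0 x'') z
        = pd j T0 z + pd j (fun x'' => ε * ∑ α, M α (c • x'') * pd α T0 x'') z :=
      pd_add (hT0D z hz) (hd1.const_mul ε)
    have e3 : pd j (fun x'' => ε * ∑ α, M α (c • x'') * pd α T0 x'') z
        = ε * pd j (fun x'' => ∑ α, M α (c • x'') * pd α T0 x'') z := pd_const_mul ε hd1
    have e4 : pd j (fun x'' => ∑ α, M α (c • x'') * pd α T0 x'') z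
        = ∑ α, pd j (fun x'' => M α (c • x'') * pd α T0 x'') z :=
      pd_sum fun α _ => (hcomp (M α) z (hMD α _)).mul (hdT0D α z hz)
    have e5 : ∀ α : Fin n, pd j (fun x'' => M α (c • x'') * pd α T0 x'') z
        = c * pd j (M α) (c • z) * pd α T0 z + M α (c • z) * pd j (pd α T0) z := fun α =>
      pd_comp_mul c (M α) (pd α T0) (hMD α _) (hdT0D α z hz)
    rw [e1, e2, e3, e4]
    congr 1
    congr 1
    rw [Finset.mul_sum]
    refine Finset.sum_congr rfl fun α _ => ?_
    rw [e5 α]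
    linear_combination (pd j (M α) (c • z) * pd α T0 z) * hεc
  -- split the flux of the residual into the Te flux minus the T1 flux
  have hAB : ∀ i : Fin n,
      pd i (fun x' => ∑ j, k i j (c • x') * pd j (fun x'' => Te x''
          - (T0 x'' + ε * ∑ α, M α (c • x'') * pd α T0 x'')) x') x
      = pd i (fun x' => ∑ j, k i j (c • x') * pd j Te x') x
        - pd i (fun x' => ∑ j, k i j (c • x') * (pd j T0 x'
            + ∑ α, (pd j (M α) (c • x') * pd α T0 x'
              + ε * (M α (c • x') * pd j (pd α T0) x')))) x := by
    intro i
    have hev : (fun x' => ∑ j, k i j (c • x') * pd j (fun x'' => Te x''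
          - (T0 x'' + ε * ∑ α, M α (c • x'') * pd α T0 x'')) x')
        =ᶠ[nhds x] (fun x' => (∑ j, k i j (c • x') * pd j Te x')
          - ∑ j, k i j (c • x') * (pd j T0 x'
            + ∑ α, (pd j (M α) (c • x') * pd α T0 x'
              + ε * (M α (c • x') * pd j (pd α T0) x')))) := by
      filter_upwards [hΩ.mem_nhds hx] with z hz
      rw [← Finset.sum_sub_distrib]
      refine Finset.sum_congr rfl fun j _ => ?_
      rw [hinner j z hz]; ring
    have hdA : DifferentiableAt ℝ (fun x' => ∑ j, k i j (c • x') * pd j Te x') x :=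
      DifferentiableAt.fun_sum fun j _ => (hcomp (k i j) x (hkD i j _)).mul (hdTeD j x hx)
    have hdB : DifferentiableAt ℝ (fun x' => ∑ j, k i j (c • x') * (pd j T0 x'
        + ∑ α, (pd j (M α) (c • x') * pd α T0 x'
          + ε * (M α (c • x') * pd j (pd α T0) x')))) x :=
      DifferentiableAt.fun_sum fun j _ => (hcomp (k i j) x (hkD i j _)).mul
        ((hdT0D j x hx).add (DifferentiableAt.fun_sum fun α _ =>
          ((hcomp (pd j (M α)) x (hdMD α j _)).mul (hdT0D α x hx)).add
            (((hcomp (M α) x (hMD α _)).mul (hd2T0D j α x hx)).const_mul ε)))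
    rw [pd_congr hev]
    exact pd_sub hdA hdB
  -- expand the T1-flux derivative at x into atoms
  have hvD : ∀ (j : Fin n), DifferentiableAt ℝ (fun x' => pd j T0 x'
      + ∑ α, (pd j (M α) (c • x') * pd α T0 x'
        + ε * (M α (c • x') * pd j (pd α T0) x'))) x := fun j =>
    (hdT0D j x hx).add (DifferentiableAt.fun_sum fun α _ =>
      ((hcomp (pd j (M α)) x (hdMD α j _)).mul (hdT0D α x hx)).add
        (((hcomp (M α) x (hMD α _)).mul (hd2T0D j α x hx)).const_mul ε))
  have hB : ∀ i : Fin n,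
      pd i (fun x' => ∑ j, k i j (c • x') * (pd j T0 x'
          + ∑ α, (pd j (M α) (c • x') * pd α T0 x'
            + ε * (M α (c • x') * pd j (pd α T0) x')))) x
      = ∑ j, (c * pd i (k i j) (c • x) * (pd j T0 x
            + ∑ α, (pd j (M α) (c • x) * pd α T0 x + ε * (M α (c • x) * pd j (pd α T0) x)))
          + k i j (c • x) * (pd i (pd j T0) x
            + ∑ α, (c * pd i (pd j (M α)) (c • x) * pd α T0 x
              + pd j (M α) (c • x) * pd i (pd α T0) x
              + ε * (c * pd i (M α) (c • x) * pd j (pd α T0) x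
                + M α (c • x) * pd i (pd j (pd α T0)) x)))) := by
    intro i
    have e0 : pd i (fun x' => ∑ j, k i j (c • x') * (pd j T0 x'
          + ∑ α, (pd j (M α) (c • x') * pd α T0 x'
            + ε * (M α (c • x') * pd j (pd α T0) x')))) x
        = ∑ j, pd i (fun x' => k i j (c • x') * (pd j T0 x'
          + ∑ α, (pd j (M α) (c • x') * pd α T0 x'
            + ε * (M α (c • x') * pd j (pd α T0) x')))) x :=
      pd_sum fun j _ => (hcomp (k i j) x (hkD i j _)).mul (hvD j)
    rw [e0]
    refine Finset.sum_congr rfl fun j _ => ?_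
    have e1 : pd i (fun x' => k i j (c • x') * (pd j T0 x'
          + ∑ α, (pd j (M α) (c • x') * pd α T0 x'
            + ε * (M α (c • x') * pd j (pd α T0) x')))) x
        = c * pd i (k i j) (c • x) * (pd j T0 x
            + ∑ α, (pd j (M α) (c • x) * pd α T0 x + ε * (M α (c • x) * pd j (pd α T0) x)))
          + k i j (c • x) * pd i (fun x' => pd j T0 x'
            + ∑ α, (pd j (M α) (c • x') * pd α T0 x'
              + ε * (M α (c • x') * pd j (pd α T0) x'))) x :=
      pd_comp_mul c (k i j) _ (hkD i j _) (hvD j)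
    rw [e1]
    congr 1
    congr 1
    have e2 : pd i (fun x' => pd j T0 x'
          + ∑ α, (pd j (M α) (c • x') * pd α T0 x'
            + ε * (M α (c • x') * pd j (pd α T0) x'))) x
        = pd i (pd j T0) x + pd i (fun x' => ∑ α, (pd j (M α) (c • x') * pd α T0 x'
            + ε * (M α (c • x') * pd j (pd α T0) x'))) x :=
      pd_add (hdT0D j x hx) (DifferentiableAt.fun_sum fun α _ =>
        ((hcomp (pd j (M α)) x (hdMD α j _)).mul (hdT0D α x hx)).add
          (((hcomp (M α) x (hMD α _)).mul (hd2T0D j α x hx)).const_mul ε))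
    have e3 : pd i (fun x' => ∑ α, (pd j (M α) (c • x') * pd α T0 x'
          + ε * (M α (c • x') * pd j (pd α T0) x'))) x
        = ∑ α, pd i (fun x' => pd j (M α) (c • x') * pd α T0 x'
          + ε * (M α (c • x') * pd j (pd α T0) x')) x :=
      pd_sum fun α _ =>
        ((hcomp (pd j (M α)) x (hdMD α j _)).mul (hdT0D α x hx)).add
          (((hcomp (M α) x (hMD α _)).mul (hd2T0D j α x hx)).const_mul ε)
    have e4 : ∀ α : Fin n, pd i (fun x' => pd j (M α) (c • x') * pd α T0 x'
          + ε * (M α (c • x') * pd j (pd α T0) x')) x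
        = c * pd i (pd j (M α)) (c • x) * pd α T0 x
            + pd j (M α) (c • x) * pd i (pd α T0) x
            + ε * (c * pd i (M α) (c • x) * pd j (pd α T0) x
              + M α (c • x) * pd i (pd j (pd α T0)) x) := by
      intro α
      have f1 : pd i (fun x' => pd j (M α) (c • x') * pd α T0 x'
            + ε * (M α (c • x') * pd j (pd α T0) x')) x
          = pd i (fun x' => pd j (M α) (c • x') * pd α T0 x') x
            + pd i (fun x' => ε * (M α (c • x') * pd j (pd α T0) x')) x :=
        pd_add ((hcomp (pd j (M α)) x (hdMD α j _)).mul (hdT0D α x hx))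
          (((hcomp (M α) x (hMD α _)).mul (hd2T0D j α x hx)).const_mul ε)
      have f2 : pd i (fun x' => ε * (M α (c • x') * pd j (pd α T0) x')) x
          = ε * pd i (fun x' => M α (c • x') * pd j (pd α T0) x') x :=
        pd_const_mul ε ((hcomp (M α) x (hMD α _)).mul (hd2T0D j α x hx))
      rw [f1, f2, pd_comp_mul c (pd j (M α)) (pd α T0) (hdMD α j _) (hdT0D α x hx),
        pd_comp_mul c (M α) (pd j (pd α T0)) (hMD α _) (hd2T0D j α x hx)]
    rw [e2, e3]
    congr 1
    exact Finset.sum_congr rfl fun α _ => e4 α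
  -- cell equation in expanded form
  have key : ∀ α : Fin n, ∑ i, ∑ j, (pd i (k i j) (c • x) * pd j (M α) (c • x)
      + k i j (c • x) * pd i (pd j (M α)) (c • x)) = -∑ i, pd i (k i α) (c • x) := by
    intro α
    have e : ∀ i : Fin n, pd i (fun y' => ∑ j, k i j y' * pd j (M α) y') (c • x)
        = ∑ j, (pd i (k i j) (c • x) * pd j (M α) (c • x)
          + k i j (c • x) * pd i (pd j (M α)) (c • x)) := by
      intro i
      have e0 : pd i (fun y' => ∑ j, k i j y' * pd j (M α) y') (c • x)
          = ∑ j, pd i (fun y' => k i j y' * pd j (M α) y') (c • x) :=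
        pd_sum fun j _ => (hkD i j _).mul (hdMD α j _)
      rw [e0]
      exact Finset.sum_congr rfl fun j _ => pd_mul (hkD i j _) (hdMD α j _)
    rw [← hcell α (c • x)]
    exact (Finset.sum_congr rfl fun i _ => (e i)).symm
  -- the four right-hand side terms
  have hR2 : ∀ i : Fin n, pd i (fun x' => ∑ j, k i j (c • x) * pd j T0 x') x
      = ∑ j, k i j (c • x) * pd i (pd j T0) x := by
    intro i
    have e0 : pd i (fun x' => ∑ j, k i j (c • x) * pd j T0 x') x
        = ∑ j, pd i (fun x' => k i j (c • x) * pd j T0 x') x :=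
      pd_sum fun j _ => (hdT0D j x hx).const_mul _
    rw [e0]
    exact Finset.sum_congr rfl fun j _ => pd_const_mul _ (hdT0D j x hx)
  have hR3 : ∀ i : Fin n,
      pd i (fun x' => ∑ j, k i j (c • x) *
        pd j (fun y' => ∑ α, M α y' * pd α T0 x') (c • x)) x
      = ∑ j, k i j (c • x) * ∑ α, pd j (M α) (c • x) * pd i (pd α T0) x := by
    intro i
    have einner : (fun x' => ∑ j, k i j (c • x) *
          pd j (fun y' => ∑ α, M α y' * pd α T0 x') (c • x))
        = fun x' => ∑ j, k i j (c • x) * ∑ α, pd j (M α) (c • x) * pd α T0 x' := by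
      funext z
      refine Finset.sum_congr rfl fun j _ => ?_
      congr 1
      have e0 : pd j (fun y' => ∑ α, M α y' * pd α T0 z) (c • x)
          = ∑ α, pd j (fun y' => M α y' * pd α T0 z) (c • x) :=
        pd_sum fun α _ => (hMD α _).mul_const _
      rw [e0]
      exact Finset.sum_congr rfl fun α _ => pd_mul_const _ (hMD α _)
    rw [einner]
    have e1 : pd i (fun x' => ∑ j, k i j (c • x) * ∑ α, pd j (M α) (c • x) * pd α T0 x') x
        = ∑ j, pd i (fun x' => k i j (c • x) * ∑ α, pd j (M α) (c • x) * pd α T0 x') x :=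
      pd_sum fun j _ =>
        (DifferentiableAt.fun_sum fun α _ => (hdT0D α x hx).const_mul _).const_mul _
    rw [e1]
    refine Finset.sum_congr rfl fun j _ => ?_
    have e2 : pd i (fun x' => k i j (c • x) * ∑ α, pd j (M α) (c • x) * pd α T0 x') x
        = k i j (c • x) * pd i (fun x' => ∑ α, pd j (M α) (c • x) * pd α T0 x') x :=
      pd_const_mul _ (DifferentiableAt.fun_sum fun α _ => (hdT0D α x hx).const_mul _)
    rw [e2]
    congr 1
    have e3 : pd i (fun x' => ∑ α, pd j (M α) (c • x) * pd α T0 x') x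
        = ∑ α, pd i (fun x' => pd j (M α) (c • x) * pd α T0 x') x :=
      pd_sum fun α _ => (hdT0D α x hx).const_mul _
    rw [e3]
    exact Finset.sum_congr rfl fun α _ => pd_const_mul _ (hdT0D α x hx)
  have hR4 : ∀ i : Fin n,
      pd i (fun y' => ∑ j, k i j y' *
        pd j (fun x' => ∑ α, M α y' * pd α T0 x') x) (c • x)
      = ∑ j, (pd i (k i j) (c • x) * ∑ α, M α (c • x) * pd j (pd α T0) x
          + k i j (c • x) * ∑ α, pd i (M α) (c • x) * pd j (pd α T0) x) := by
    intro i
    have einner : (fun y' => ∑ j, k i j y' *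
          pd j (fun x' => ∑ α, M α y' * pd α T0 x') x)
        = fun y' => ∑ j, k i j y' * ∑ α, M α y' * pd j (pd α T0) x := by
      funext z
      refine Finset.sum_congr rfl fun j _ => ?_
      congr 1
      have e0 : pd j (fun x' => ∑ α, M α z * pd α T0 x') x
          = ∑ α, pd j (fun x' => M α z * pd α T0 x') x :=
        pd_sum fun α _ => (hdT0D α x hx).const_mul _
      rw [e0]
      exact Finset.sum_congr rfl fun α _ => pd_const_mul _ (hdT0D α x hx)
    rw [einner]
    have e1 : pd i (fun y' => ∑ j, k i j y' * ∑ α, M α y' * pd j (pd α T0) x) (c • x)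
        = ∑ j, pd i (fun y' => k i j y' * ∑ α, M α y' * pd j (pd α T0) x) (c • x) :=
      pd_sum fun j _ => (hkD i j _).mul
        (DifferentiableAt.fun_sum fun α _ => (hMD α _).mul_const _)
    rw [e1]
    refine Finset.sum_congr rfl fun j _ => ?_
    have e2 : pd i (fun y' => k i j y' * ∑ α, M α y' * pd j (pd α T0) x) (c • x)
        = pd i (k i j) (c • x) * (∑ α, M α (c • x) * pd j (pd α T0) x)
          + k i j (c • x) * pd i (fun y' => ∑ α, M α y' * pd j (pd α T0) x) (c • x) :=
      pd_mul (hkD i j _) (DifferentiableAt.fun_sum fun α _ => (hMD α _).mul_const _)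
    rw [e2]
    congr 1
    have e3 : pd i (fun y' => ∑ α, M α y' * pd j (pd α T0) x) (c • x)
        = ∑ α, pd i (fun y' => M α y' * pd j (pd α T0) x) (c • x) :=
      pd_sum fun α _ => (hMD α _).mul_const _
    rw [e3]
    congr 1
    exact Finset.sum_congr rfl fun α _ => pd_mul_const _ (hMD α _)
  have hR5 : ∀ i : Fin n,
      pd i (fun x' => ∑ j, k i j (c • x) *
        pd j (fun x'' => ∑ α, M α (c • x) * pd α T0 x'') x') x
      = ∑ j, k i j (c • x) * ∑ α, M α (c • x) * pd i (pd j (pd α T0)) x := by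
    intro i
    have hev : (fun x' => ∑ j, k i j (c • x) *
          pd j (fun x'' => ∑ α, M α (c • x) * pd α T0 x'') x')
        =ᶠ[nhds x] fun x' => ∑ j, k i j (c • x) * ∑ α, M α (c • x) * pd j (pd α T0) x' := by
      filter_upwards [hΩ.mem_nhds hx] with z hz
      refine Finset.sum_congr rfl fun j _ => ?_
      congr 1
      have e0 : pd j (fun x'' => ∑ α, M α (c • x) * pd α T0 x'') z
          = ∑ α, pd j (fun x'' => M α (c • x) * pd α T0 x'') z :=
        pd_sum fun α _ => (hdT0D α z hz).const_mul _
      rw [e0]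
      exact Finset.sum_congr rfl fun α _ => pd_const_mul _ (hdT0D α z hz)
    rw [pd_congr hev]
    have e1 : pd i (fun x' => ∑ j, k i j (c • x) * ∑ α, M α (c • x) * pd j (pd α T0) x') x
        = ∑ j, pd i (fun x' => k i j (c • x) * ∑ α, M α (c • x) * pd j (pd α T0) x') x :=
      pd_sum fun j _ =>
        (DifferentiableAt.fun_sum fun α _ => (hd2T0D j α x hx).const_mul _).const_mul _
    rw [e1]
    refine Finset.sum_congr rfl fun j _ => ?_
    have e2 : pd i (fun x' => k i j (c • x) * ∑ α, M α (c • x) * pd j (pd α T0) x') x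
        = k i j (c • x) * pd i (fun x' => ∑ α, M α (c • x) * pd j (pd α T0) x') x :=
      pd_const_mul _ (DifferentiableAt.fun_sum fun α _ => (hd2T0D j α x hx).const_mul _)
    rw [e2]
    congr 1
    have e3 : pd i (fun x' => ∑ α, M α (c • x) * pd j (pd α T0) x') x
        = ∑ α, pd i (fun x' => M α (c • x) * pd j (pd α T0) x') x :=
      pd_sum fun α _ => (hd2T0D j α x hx).const_mul _
    rw [e3]
    exact Finset.sum_congr rfl fun α _ => pd_const_mul _ (hd2T0D j α x hx)
  -- assemble everything
  have hL : ∑ i, pd i (fun x' => ∑ j, k i j (c • x') * pd j (fun x'' => Te x''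
        - (T0 x'' + ε * ∑ α, M α (c • x'') * pd α T0 x'')) x') x
      = (∑ i, pd i (fun x' => ∑ j, k i j (c • x') * pd j Te x') x)
        - ∑ i, pd i (fun x' => ∑ j, k i j (c • x') * (pd j T0 x'
            + ∑ α, (pd j (M α) (c • x') * pd α T0 x'
              + ε * (M α (c • x') * pd j (pd α T0) x')))) x := by
    rw [← Finset.sum_sub_distrib]
    exact Finset.sum_congr rfl fun i _ => hAB i
  have hBs : ∑ i, pd i (fun x' => ∑ j, k i j (c • x') * (pd j T0 x'
        + ∑ α, (pd j (M α) (c • x') * pd α T0 x'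
          + ε * (M α (c • x') * pd j (pd α T0) x')))) x
      = ∑ i, ∑ j, (c * pd i (k i j) (c • x) * (pd j T0 x
            + ∑ α, (pd j (M α) (c • x) * pd α T0 x + ε * (M α (c • x) * pd j (pd α T0) x)))
          + k i j (c • x) * (pd i (pd j T0) x
            + ∑ α, (c * pd i (pd j (M α)) (c • x) * pd α T0 x
              + pd j (M α) (c • x) * pd i (pd α T0) x
              + ε * (c * pd i (M α) (c • x) * pd j (pd α T0) x
                + M α (c • x) * pd i (pd j (pd α T0)) x)))) :=
    Finset.sum_congr rfl fun i _ => hB i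
  have hR2s : ∑ i, pd i (fun x' => ∑ j, k i j (c • x) * pd j T0 x') x
      = ∑ i, ∑ j, k i j (c • x) * pd i (pd j T0) x :=
    Finset.sum_congr rfl fun i _ => hR2 i
  have hR3s : ∑ i, pd i (fun x' => ∑ j, k i j (c • x) *
        pd j (fun y' => ∑ α, M α y' * pd α T0 x') (c • x)) x
      = ∑ i, ∑ j, k i j (c • x) * ∑ α, pd j (M α) (c • x) * pd i (pd α T0) x :=
    Finset.sum_congr rfl fun i _ => hR3 i
  have hR4s : ∑ i, pd i (fun y' => ∑ j, k i j y' *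
        pd j (fun x' => ∑ α, M α y' * pd α T0 x') x) (c • x)
      = ∑ i, ∑ j, (pd i (k i j) (c • x) * ∑ α, M α (c • x) * pd j (pd α T0) x
          + k i j (c • x) * ∑ α, pd i (M α) (c • x) * pd j (pd α T0) x) :=
    Finset.sum_congr rfl fun i _ => hR4 i
  have hR5s : ∑ i, pd i (fun x' => ∑ j, k i j (c • x) *
        pd j (fun x'' => ∑ α, M α (c • x) * pd α T0 x'') x') x
      = ∑ i, ∑ j, k i j (c • x) * ∑ α, M α (c • x) * pd i (pd j (pd α T0)) x :=
    Finset.sum_congr rfl fun i _ => hR5 i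
  have FA : (∑ i, ∑ j, (c * pd i (k i j) (c • x) * (pd j T0 x
            + ∑ α, (pd j (M α) (c • x) * pd α T0 x + ε * (M α (c • x) * pd j (pd α T0) x)))
          + k i j (c • x) * (pd i (pd j T0) x
            + ∑ α, (c * pd i (pd j (M α)) (c • x) * pd α T0 x
              + pd j (M α) (c • x) * pd i (pd α T0) x
              + ε * (c * pd i (M α) (c • x) * pd j (pd α T0) x
                + M α (c • x) * pd i (pd j (pd α T0)) x)))))
      = (∑ i, ∑ j, k i j (c • x) * pd i (pd j T0) x)
      + (∑ i, ∑ j, k i j (c • x) * ∑ α, pd j (M α) (c • x) * pd i (pd α T0) x)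
      + (∑ i, ∑ j, (pd i (k i j) (c • x) * ∑ α, M α (c • x) * pd j (pd α T0) x
          + k i j (c • x) * ∑ α, pd i (M α) (c • x) * pd j (pd α T0) x))
      + ε * (∑ i, ∑ j, k i j (c • x) * ∑ α, M α (c • x) * pd i (pd j (pd α T0)) x) :=
    final_algebra c ε hεc (fun i j => k i j (c • x)) (fun i j => pd i (k i j) (c • x))
      (fun j α => pd j (M α) (c • x)) (fun a b => pd a (pd b T0) x)
      (fun α => M α (c • x)) (fun α => pd α T0 x)
      (fun i j α => pd i (pd j (M α)) (c • x)) (fun i j α => pd i (pd j (pd α T0)) x) key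
  rw [hL, hBs, hT0eq', hR2s, hR3s, hR4s, hR5s]
  linear_combination hTeeq' + FA
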